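/- Let (R, 𝔪) be a noetherian local ring of prime characteristic p, let I ≠ R be a non-zero ideal of R, let a, b ∈ R, let S = {r + iθ : r ∈ R, i ∈ I} ⊆ R[t]/(t² + at + b) be the subalgebra realizing R(I)_{a,b}, with maximal ideal 𝔫 = {m + iθ : m ∈ 𝔪, i ∈ I}. Then for every q = p^e with e ∈ ℕ, the ideal 𝔫^{[q]} of S generated by the q-th powers of the elements of 𝔫 equals the set {r + jθ : r ∈ 𝔪^{[q]}, j ∈ 𝔪^{[q]}I + B_q I^{[q]}}, where B_q = Σ_{u,v ∈ ℕ, u+2v = q−1} C(u+v,u) (−a)^u (−b)^v ∈ R. -/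

import Mathlib

open Polynomial Finset

/-- The `q`-th bracket power `J^{[q]}` of an ideal: the ideal generated by the `q`-th
powers of the elements of `J`. -/
noncomputable def bracketPow {A : Type*} [CommSemiring A] (J : Ideal A) (q : ℕ) : Ideal A :=
  Ideal.span ((fun x => x ^ q) '' (J : Set A))

/-- The element `B_q = ∑_{u,v ∈ ℕ, u+2v = q-1} C(u+v,u) (-a)ᵘ (-b)ᵛ` of `R`; the condition
`u + 2v = q - 1` is encoded as `u + 2v + 1 = q`, and all such pairs lie in
`range (q+1) ×ˢ range (q+1)`. -/
noncomputable def Bq {R : Type*} [CommRing R] (a b : R) (q : ℕ) : R :=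
  ∑ uv ∈ (range (q + 1) ×ˢ range (q + 1)).filter (fun uv => uv.1 + 2 * uv.2 + 1 = q),
    ((uv.1 + uv.2).choose uv.1 : R) * (-a) ^ uv.1 * (-b) ^ uv.2

section Aux

variable {R : Type*} [CommRing R]

/-- Single-index version of the sum `Bq`. -/
noncomputable def Tsum (x y : R) (m : ℕ) : R :=
  ∑ v ∈ range (m + 1), if 2 * v ≤ m then ((m - v).choose v : R) * x ^ (m - 2 * v) * y ^ v else 0

lemma Tsum_zero (x y : R) : Tsum x y 0 = 1 := by
  simp [Tsum]

lemma Tsum_one (x y : R) : Tsum x y 1 = x := by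
  simp [Tsum, Finset.sum_range_succ]

lemma Tsum_rec (x y : R) (m : ℕ) :
    Tsum x y (m + 2) = x * Tsum x y (m + 1) + y * Tsum x y m := by
  unfold Tsum
  rw [Finset.mul_sum, Finset.mul_sum]
  rw [show m + 2 + 1 = (m + 2) + 1 from rfl, Finset.sum_range_succ (n := m + 2),
    if_neg (by omega : ¬ 2 * (m + 2) ≤ m + 2), add_zero]
  rw [Finset.sum_range_succ' _ (m + 1), Finset.sum_range_succ' (fun v =>
    x * (if 2 * v ≤ m + 1 then ((m + 1 - v).choose v : R) * x ^ (m + 1 - 2 * v) * y ^ v else 0)) (m + 1)]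
  rw [add_assoc, add_comm (x * _), ← add_assoc, ← Finset.sum_add_distrib]
  congr 1
  · apply Finset.sum_congr rfl
    intro v hv
    simp only [Finset.mem_range] at hv
    rcases Nat.lt_or_ge (2 * v) m with h | h
    · rw [if_pos (by omega), if_pos (by omega), if_pos (by omega)]
      rw [show m + 2 - (v + 1) = (m - v) + 1 from by omega,
        show m + 1 - (v + 1) = m - v from by omega, Nat.choose_succ_succ']
      push_cast
      rw [show m + 2 - 2 * (v + 1) = m - 2 * v from by omega,
        show m - 2 * v = (m + 1 - 2 * (v + 1)) + 1 from by omega, pow_succ]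
      ring
    · rcases Nat.eq_or_lt_of_le h with h2 | h2
      · subst h2
        rw [if_pos (by omega), if_neg (by omega), if_pos (by omega)]
        rw [show 2 * v + 2 - (v + 1) = v + 1 from by omega,
          show 2 * v + 2 - 2 * (v + 1) = 0 from by omega,
          show 2 * v - v = v from by omega,
          show 2 * v - 2 * v = 0 from by omega, Nat.choose_self, Nat.choose_self]
        push_cast
        ring
      · rw [if_neg (by omega), if_neg (by omega), if_neg (by omega)]
        ring
  · rw [if_pos (by omega), if_pos (by omega)]
    simp only [Nat.choose_zero_right, Nat.cast_one]
    push_cast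
    ring

lemma Bq_succ (a b : R) (n : ℕ) : Bq a b (n + 1) = Tsum (-a) (-b) n := by
  have key : ∀ v, (∑ u ∈ range (n + 1 + 1),
      if u + 2 * v + 1 = n + 1 then ((u + v).choose u : R) * (-a) ^ u * (-b) ^ v else 0)
      = if 2 * v ≤ n then ((n - v).choose v : R) * (-a) ^ (n - 2 * v) * (-b) ^ v else 0 := by
    intro v
    by_cases h : 2 * v ≤ n
    · rw [if_pos h, Finset.sum_eq_single (n - 2 * v)]
      · have hc : (n - 2 * v + v).choose (n - 2 * v) = (n - v).choose v := by
          rw [show n - 2 * v + v = n - v from by omega,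
            show n - 2 * v = (n - v) - v from by omega]
          exact Nat.choose_symm (by omega)
        rw [if_pos (by omega), hc]
      · intro u hu hune
        rw [if_neg (by omega)]
      · intro habs
        simp only [Finset.mem_range] at habs
        omega
    · rw [if_neg h]
      apply Finset.sum_eq_zero
      intro u hu
      rw [if_neg (by omega)]
  calc Bq a b (n + 1)
      = ∑ v ∈ range (n + 1 + 1), ∑ u ∈ range (n + 1 + 1),
          (if u + 2 * v + 1 = n + 1 then ((u + v).choose u : R) * (-a) ^ u * (-b) ^ v else 0) := by
        rw [Bq, Finset.sum_filter, Finset.sum_product, Finset.sum_comm]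
    _ = ∑ v ∈ range (n + 1 + 1),
          (if 2 * v ≤ n then ((n - v).choose v : R) * (-a) ^ (n - 2 * v) * (-b) ^ v else 0) :=
        Finset.sum_congr rfl fun v _ => key v
    _ = Tsum (-a) (-b) n := by
        rw [Finset.sum_range_succ, if_neg (by omega : ¬ 2 * (n + 1) ≤ n), add_zero, Tsum]

/-- The "constant coefficient" of `θ ^ (n+1)`. -/
noncomputable def AA (a b : R) : ℕ → R
  | 0 => 0
  | (k + 1) => -b * Tsum (-a) (-b) k

section
variable [Nontrivial R] (a b : R)

lemma f_monic : (X ^ 2 + C a * X + C b).Monic := by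
  rw [add_assoc]
  exact monic_X_pow_add (lt_of_le_of_lt degree_linear_le (by norm_num))

lemma f_degree : (X ^ 2 + C a * X + C b).degree = 2 := by
  rw [add_assoc, degree_add_eq_left_of_degree_lt]
  · exact degree_X_pow 2
  · rw [degree_X_pow]
    exact lt_of_le_of_lt degree_linear_le (by norm_num)

lemma algebraMap_adjoinRoot_injective :
    Function.Injective (algebraMap R (AdjoinRoot (X ^ 2 + C a * X + C b))) := by
  rw [injective_iff_map_eq_zero]
  intro r hr
  have h1 : AdjoinRoot.mk (X ^ 2 + C a * X + C b) (C r) = 0 := hr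
  have h2 := congrArg (AdjoinRoot.modByMonicHom (f_monic a b)) h1
  have hlt : (C r).degree < (X ^ 2 + C a * X + C b).degree := by
    rw [f_degree a b]
    exact lt_of_le_of_lt degree_C_le (by norm_num)
  rw [AdjoinRoot.modByMonicHom_mk, map_zero,
    (modByMonic_eq_self_iff (f_monic a b)).mpr hlt] at h2
  exact_mod_cast (C_eq_zero).mp h2

omit [Nontrivial R] in
lemma root_sq :
    (AdjoinRoot.root (X ^ 2 + C a * X + C b)) ^ 2 =
      -(algebraMap R _ a * AdjoinRoot.root (X ^ 2 + C a * X + C b)) - algebraMap R _ b := by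
  have h := AdjoinRoot.eval₂_root (X ^ 2 + C a * X + C b)
  simp only [eval₂_add, eval₂_mul, eval₂_pow, eval₂_X, eval₂_C] at h
  rw [AdjoinRoot.algebraMap_eq]
  linear_combination h

omit [Nontrivial R] in
lemma root_pow (n : ℕ) :
    (AdjoinRoot.root (X ^ 2 + C a * X + C b)) ^ (n + 1) =
      algebraMap R _ (AA a b n) +
        algebraMap R _ (Tsum (-a) (-b) n) * AdjoinRoot.root (X ^ 2 + C a * X + C b) := by
  induction n with
  | zero => simp [AA, Tsum_zero]
  | succ k ih =>
    have hrec : Tsum (-a) (-b) (k + 1) = AA a b k + -a * Tsum (-a) (-b) k := by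
      cases k with
      | zero => rw [Tsum_one, Tsum_zero]; simp [AA]
      | succ m => rw [Tsum_rec]; simp [AA]; ring
    rw [pow_succ (AdjoinRoot.root (X ^ 2 + C a * X + C b)) (k + 1), ih, hrec]
    simp only [map_add, map_mul, map_neg, AA]
    linear_combination (algebraMap R (AdjoinRoot (X ^ 2 + C a * X + C b)) (Tsum (-a) (-b) k)) *
      root_sq a b

end

end Aux

lemma bracketPow_induction {A : Type*} [CommSemiring A] {J : Ideal A} {q : ℕ}
    {motive : A → Prop} {x : A} (hx : x ∈ bracketPow J q)
    (mem : ∀ y ∈ J, motive (y ^ q))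
    (zero : motive 0)
    (add : ∀ y z, motive y → motive z → motive (y + z))
    (mul : ∀ (c : A), ∀ y, motive y → motive (c * y)) : motive x := by
  have hx' : x ∈ Submodule.span A ((fun y => y ^ q) '' (J : Set A)) := hx
  refine Submodule.span_induction (p := fun y _ => motive y) ?_ zero
    (fun y z _ _ hy hz => add y z hy hz)
    (fun c y _ hy => by
      show motive (c • y)
      have h2 : motive (c * y) := mul c y hy
      simpa [smul_eq_mul] using h2) hx'
  rintro _ ⟨z, hz, rfl⟩
  exact mem z hz

set_option maxHeartbeats 1000000 in
set_option synthInstance.maxHeartbeats 400000 in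
/-- Let `(R, 𝔪)` be a noetherian local ring of prime characteristic `p`,
`I ≠ R` a non-zero ideal, `a b ∈ R`, and let `S = {r + iθ : r ∈ R, i ∈ I}` be the
subalgebra of `R[t]/(t² + a t + b)` realizing `R(I)_{a,b}`, with maximal ideal
`𝔫 = {m + iθ : m ∈ 𝔪, i ∈ I}`. Then for `q = p ^ e`, the ideal `𝔫^{[q]}` of `S`, viewed
as a subset of the ambient ring, equals `{r + jθ : r ∈ 𝔪^{[q]}, j ∈ 𝔪^{[q]}I + B_q I^{[q]}}`. -/
theorem bracket_power_of_maximal_ideal {R : Type*} [CommRing R] [IsNoetherianRing R]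
    [IsLocalRing R] (p : ℕ) (hp : p.Prime) [CharP R p]
    (I : Ideal R) (hI : I ≠ ⊤) (hI0 : I ≠ ⊥) (a b : R)
    (S : Subalgebra R (AdjoinRoot (X ^ 2 + C a * X + C b)))
    (hS : (S : Set (AdjoinRoot (X ^ 2 + C a * X + C b)))
      = {x | ∃ r : R, ∃ i ∈ I,
          x = algebraMap R (AdjoinRoot (X ^ 2 + C a * X + C b)) r
            + algebraMap R (AdjoinRoot (X ^ 2 + C a * X + C b)) i
              * AdjoinRoot.root (X ^ 2 + C a * X + C b)})
    (N : Ideal ↥S)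
    (hN : Subtype.val '' (N : Set ↥S)
      = {x | ∃ m ∈ IsLocalRing.maximalIdeal R, ∃ i ∈ I,
          x = algebraMap R (AdjoinRoot (X ^ 2 + C a * X + C b)) m
            + algebraMap R (AdjoinRoot (X ^ 2 + C a * X + C b)) i
              * AdjoinRoot.root (X ^ 2 + C a * X + C b)})
    (e : ℕ) (q : ℕ) (hq : q = p ^ e) :
    Subtype.val '' (bracketPow N q : Set ↥S)
      = {x | ∃ r ∈ bracketPow (IsLocalRing.maximalIdeal R) q,
          ∃ j ∈ bracketPow (IsLocalRing.maximalIdeal R) q * I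
              + Ideal.span {Bq a b q} * bracketPow I q,
          x = algebraMap R (AdjoinRoot (X ^ 2 + C a * X + C b)) r
            + algebraMap R (AdjoinRoot (X ^ 2 + C a * X + C b)) j
              * AdjoinRoot.root (X ^ 2 + C a * X + C b)} := by
  haveI : Fact p.Prime := ⟨hp⟩
  set A := AdjoinRoot (X ^ 2 + C a * X + C b) with hAdef
  set θ := AdjoinRoot.root (X ^ 2 + C a * X + C b) with hθdef
  set φ := algebraMap R (AdjoinRoot (X ^ 2 + C a * X + C b)) with hφdef
  haveI : CharP A p := charP_of_injective_algebraMap (algebraMap_adjoinRoot_injective a b) p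
  obtain ⟨q', rfl⟩ : ∃ q', q = q' + 1 := ⟨q - 1, by have h1 : 0 < p ^ e := pow_pos hp.pos e; omega⟩
  set B := Bq a b (q' + 1) with hBdef
  have hBT : B = Tsum (-a) (-b) q' := Bq_succ a b q'
  have hθq : θ ^ (q' + 1) = φ (AA a b q') + φ B * θ := by
    rw [hBT]; exact root_pow a b q'
  have hIm : I ≤ IsLocalRing.maximalIdeal R := IsLocalRing.le_maximalIdeal hI
  set M := bracketPow (IsLocalRing.maximalIdeal R) (q' + 1) with hMdef
  set Iq := bracketPow I (q' + 1) with hIqdef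
  set J := M * I + Ideal.span {B} * Iq with hJdef
  have hIqM : Iq ≤ M := Ideal.span_mono (Set.image_mono hIm)
  have hJM : J ≤ M := by
    rw [hJdef, Submodule.add_eq_sup]
    exact sup_le Ideal.mul_le_left (le_trans Ideal.mul_le_right hIqM)
  have hmm : ∀ m ∈ IsLocalRing.maximalIdeal R, m ^ (q' + 1) ∈ M :=
    fun m hm => Ideal.subset_span ⟨m, hm, rfl⟩
  have hmemN : ∀ s : ↥S,
      (∃ m ∈ IsLocalRing.maximalIdeal R, ∃ i ∈ I, (s : A) = φ m + φ i * θ) → s ∈ N := by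
    intro s hs
    have h1 : (s : A) ∈ Subtype.val '' (N : Set ↥S) := by rw [hN]; exact hs
    obtain ⟨n, hn, hns⟩ := h1
    rwa [← Subtype.coe_injective hns]
  have hvalN : ∀ s : ↥S, s ∈ N →
      ∃ m ∈ IsLocalRing.maximalIdeal R, ∃ i ∈ I, (s : A) = φ m + φ i * θ := by
    intro s hs
    have h1 : (s : A) ∈ Subtype.val '' (N : Set ↥S) := ⟨s, hs, rfl⟩
    rwa [hN] at h1
  have hpow : ∀ m i : R, (φ m + φ i * θ) ^ (q' + 1)
      = φ (m ^ (q' + 1) + AA a b q' * i ^ (q' + 1)) + φ (B * i ^ (q' + 1)) * θ := by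
    intro m i
    have h1 : (φ m + φ i * θ) ^ (q' + 1) = (φ m) ^ (q' + 1) + (φ i * θ) ^ (q' + 1) := by
      rw [hq]
      exact add_pow_char_pow _ _ p e
    rw [h1, mul_pow, hθq, ← map_pow, ← map_pow]
    simp only [map_add, map_mul]
    ring
  apply Set.Subset.antisymm
  · -- forward inclusion
    rintro x ⟨s, hs, rfl⟩
    have main : ∃ r ∈ M, ∃ j ∈ J, (s : A) = φ r + φ j * θ := by
      have hs' : s ∈ bracketPow N (q' + 1) := hs
      refine bracketPow_induction hs'
        (motive := fun (t : ↥S) => ∃ r ∈ M, ∃ j ∈ J, (t : A) = φ r + φ j * θ) ?_ ?_ ?_ ?_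
      · intro n hn
        obtain ⟨m, hm, i, hi, hni⟩ := hvalN n hn
        refine ⟨m ^ (q' + 1) + AA a b q' * i ^ (q' + 1),
          add_mem (hmm m hm) (Ideal.mul_mem_left _ _ (hmm i (hIm hi))),
          B * i ^ (q' + 1), ?_, ?_⟩
        · rw [hJdef, Submodule.add_eq_sup]
          exact Submodule.mem_sup_right
            (Ideal.mul_mem_mul (Ideal.mem_span_singleton_self B) (Ideal.subset_span ⟨i, hi, rfl⟩))
        · rw [Subalgebra.coe_pow, hni, hpow m i]
      · exact ⟨0, zero_mem _, 0, zero_mem _, by simp⟩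
      · rintro x y ⟨r1, hr1, j1, hj1, hx1⟩ ⟨r2, hr2, j2, hj2, hy1⟩
        refine ⟨r1 + r2, add_mem hr1 hr2, j1 + j2, add_mem hj1 hj2, ?_⟩
        rw [Subalgebra.coe_add, hx1, hy1]
        simp only [map_add]
        ring
      · rintro c x ⟨r, hr, j, hj, hx1⟩
        obtain ⟨r', i', hi', hc⟩ : ∃ r', ∃ i' ∈ I, (c : A) = φ r' + φ i' * θ := by
          have h1 : (c : A) ∈ (S : Set A) := c.2
          rwa [hS] at h1
        have hjM : j ∈ M := hJM hj
        refine ⟨r' * r - b * (i' * j),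
          sub_mem (Ideal.mul_mem_left _ _ hr) (Ideal.mul_mem_left _ _ (Ideal.mul_mem_left _ _ hjM)),
          r' * j + r * i' - a * (i' * j), ?_, ?_⟩
        · refine sub_mem (add_mem (Ideal.mul_mem_left _ _ hj) ?_) (Ideal.mul_mem_left _ _ (Ideal.mul_mem_left _ _ hj))
          rw [hJdef, Submodule.add_eq_sup]
          exact Submodule.mem_sup_left (Ideal.mul_mem_mul hr hi')
        · rw [Subalgebra.coe_mul, hc, hx1]
          simp only [map_sub, map_add, map_mul]
          linear_combination (φ i' * φ j) * root_sq a b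
    obtain ⟨r, hr, j, hj, h⟩ := main
    exact ⟨r, hr, j, hj, h⟩
  · -- reverse inclusion
    rintro x ⟨r, hr, j, hj, rfl⟩
    have hSmem : ∀ i ∈ I, φ i * θ ∈ S := by
      intro i hi
      have h1 : φ i * θ ∈ (S : Set A) := by
        rw [hS]; exact ⟨0, i, hi, by simp⟩
      exact h1
    have hitN : ∀ i (hi : i ∈ I), (⟨φ i * θ, hSmem i hi⟩ : ↥S) ∈ N := by
      intro i hi
      exact hmemN _ ⟨0, zero_mem _, i, hi, by simp⟩
    have hmN : ∀ m ∈ IsLocalRing.maximalIdeal R, algebraMap R ↥S m ∈ N := by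
      intro m hm
      refine hmemN _ ⟨m, hm, 0, zero_mem _, ?_⟩
      rw [Subalgebra.coe_algebraMap, map_zero, zero_mul, add_zero]
    have claim1 : ∀ r ∈ M, algebraMap R ↥S r ∈ bracketPow N (q' + 1) := by
      intro r hr
      refine bracketPow_induction hr
        (motive := fun (r : R) => algebraMap R ↥S r ∈ bracketPow N (q' + 1)) ?_ ?_ ?_ ?_
      · intro m hm
        show algebraMap R ↥S (m ^ (q' + 1)) ∈ bracketPow N (q' + 1)
        rw [map_pow]
        exact Ideal.subset_span ⟨algebraMap R ↥S m, hmN m hm, rfl⟩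
      · show algebraMap R ↥S (0 : R) ∈ bracketPow N (q' + 1)
        rw [map_zero]; exact zero_mem _
      · intro x y hx hy
        show algebraMap R ↥S (x + y) ∈ bracketPow N (q' + 1)
        rw [map_add]; exact add_mem hx hy
      · intro c x hx
        show algebraMap R ↥S (c * x) ∈ bracketPow N (q' + 1)
        rw [map_mul]
        exact Ideal.mul_mem_left _ _ hx
    have claim_g : ∀ g ∈ Iq, ∃ s ∈ bracketPow N (q' + 1), (s : A) = φ (B * g) * θ := by
      intro g hg
      refine bracketPow_induction hg
        (motive := fun (g : R) => ∃ s ∈ bracketPow N (q' + 1), (s : A) = φ (B * g) * θ) ?_ ?_ ?_ ?_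
      · intro i hi
        refine ⟨(⟨φ i * θ, hSmem i hi⟩ : ↥S) ^ (q' + 1)
            - algebraMap R ↥S (AA a b q' * i ^ (q' + 1)),
          sub_mem (Ideal.subset_span ⟨_, hitN i hi, rfl⟩)
            (claim1 _ (Ideal.mul_mem_left _ _ (hmm i (hIm hi)))), ?_⟩
        rw [Subalgebra.coe_sub, Subalgebra.coe_pow, Subalgebra.coe_algebraMap]
        show (φ i * θ) ^ (q' + 1) - φ (AA a b q' * i ^ (q' + 1)) = _
        rw [mul_pow, hθq, ← map_pow]
        simp only [map_mul]
        ring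
      · exact ⟨0, zero_mem _, by simp⟩
      · rintro x y ⟨s1, hs1, h1⟩ ⟨s2, hs2, h2⟩
        refine ⟨s1 + s2, add_mem hs1 hs2, ?_⟩
        rw [Subalgebra.coe_add, h1, h2, mul_add]
        simp only [map_add]
        ring
      · rintro c x ⟨s, hs, h1⟩
        refine ⟨algebraMap R ↥S c * s, Ideal.mul_mem_left _ _ hs, ?_⟩
        rw [Subalgebra.coe_mul, Subalgebra.coe_algebraMap, h1]
        simp only [map_mul]
        ring
    have claim2 : ∀ j ∈ J, ∃ s ∈ bracketPow N (q' + 1), (s : A) = φ j * θ := by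
      intro j hj
      rw [hJdef, Submodule.add_eq_sup, Submodule.mem_sup] at hj
      obtain ⟨j1, hj1, j2, hj2, rfl⟩ := hj
      have h1 : ∃ s ∈ bracketPow N (q' + 1), (s : A) = φ j1 * θ := by
        refine Submodule.mul_induction_on hj1 ?_ ?_
        · intro r hr i hi
          refine ⟨algebraMap R ↥S r * ⟨φ i * θ, hSmem i hi⟩,
            Ideal.mul_mem_right _ _ (claim1 r hr), ?_⟩
          rw [Subalgebra.coe_mul, Subalgebra.coe_algebraMap]
          show φ r * (φ i * θ) = _
          rw [map_mul]
          ring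
        · rintro x y ⟨s1, hs1, hh1⟩ ⟨s2, hs2, hh2⟩
          refine ⟨s1 + s2, add_mem hs1 hs2, ?_⟩
          rw [Subalgebra.coe_add, hh1, hh2, map_add]
          ring
      have h2 : ∃ s ∈ bracketPow N (q' + 1), (s : A) = φ j2 * θ := by
        refine Submodule.mul_induction_on hj2 ?_ ?_
        · intro c hc g hg
          obtain ⟨d, hd⟩ := Ideal.mem_span_singleton.mp hc
          obtain ⟨s, hsP, hsv⟩ := claim_g g hg
          refine ⟨algebraMap R ↥S d * s, Ideal.mul_mem_left _ _ hsP, ?_⟩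
          rw [Subalgebra.coe_mul, Subalgebra.coe_algebraMap, hsv, hd]
          simp only [map_mul]
          ring
        · rintro x y ⟨s1, hs1, hh1⟩ ⟨s2, hs2, hh2⟩
          refine ⟨s1 + s2, add_mem hs1 hs2, ?_⟩
          rw [Subalgebra.coe_add, hh1, hh2, map_add]
          ring
      obtain ⟨s1, hs1, hh1⟩ := h1
      obtain ⟨s2, hs2, hh2⟩ := h2
      refine ⟨s1 + s2, add_mem hs1 hs2, ?_⟩
      rw [Subalgebra.coe_add, hh1, hh2, map_add]
      ring
    obtain ⟨sj, hsjP, hsj⟩ := claim2 j hj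
    refine ⟨algebraMap R ↥S r + sj, add_mem (claim1 r hr) hsjP, ?_⟩
    rw [Subalgebra.coe_add, Subalgebra.coe_algebraMap, hsj]
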